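/- Let n ≥ 3 be an integer. If n is odd, then the clique number and the chromatic number of the permutability graph of subgroups Γ(D_n) of the dihedral group D_n both equal 2(τ(n) − 1). If n = 2^α n' with n' odd and α ≥ 1, then both equal τ(n) + (2α + 1)τ(n') − 2. In particular, Γ(D_n) is weakly perfect. -/

import Mathlib

open scoped Pointwise

/-- The permutability graph of non-normal subgroups `Γ_N(G)`: vertices are the
non-normal (hence proper) subgroups of `G`, and two distinct vertices are adjacent
iff the corresponding subgroups permute, i.e. `HK = KH` as subsets of `G`. -/
def permGraphN (G : Type*) [Group G] :
    SimpleGraph {H : Subgroup G // ¬ H.Normal} where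
  Adj H K := H ≠ K ∧ (H.1 : Set G) * (K.1 : Set G) = (K.1 : Set G) * (H.1 : Set G)
  symm := ⟨fun _ _ ⟨hne, h⟩ => ⟨hne.symm, h.symm⟩⟩
  loopless := ⟨fun _ ⟨hne, _⟩ => hne rfl⟩

/-- The permutability graph of subgroups `Γ(G)`: vertices are the proper nontrivial
subgroups of `G`, and two distinct vertices are adjacent iff the corresponding
subgroups permute, i.e. `HK = KH` as subsets of `G`. -/
def permGraph (G : Type*) [Group G] :
    SimpleGraph {H : Subgroup G // H ≠ ⊥ ∧ H ≠ ⊤} where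
  Adj H K := H ≠ K ∧ (H.1 : Set G) * (K.1 : Set G) = (K.1 : Set G) * (H.1 : Set G)
  symm := ⟨fun _ _ ⟨hne, h⟩ => ⟨hne.symm, h.symm⟩⟩
  loopless := ⟨fun _ ⟨hne, _⟩ => hne rfl⟩

namespace Stmt13

open DihedralGroup AddSubgroup

variable {n : ℕ}

section ZModLemmas
variable [NeZero n]

lemma zmultiples_neg {A : Type*} [AddGroup A] (x : A) :
    zmultiples (-x) = zmultiples x := by
  ext y
  simp only [AddSubgroup.mem_zmultiples_iff]
  exact ⟨fun ⟨k, hk⟩ => ⟨-k, by simpa using hk⟩, fun ⟨k, hk⟩ => ⟨-k, by simpa using hk⟩⟩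

lemma mem_zmul_int {d : ℕ} (hd : d ∣ n) (x : ℤ) :
    ((x : ZMod n) ∈ zmultiples ((d : ZMod n))) ↔ (d : ℤ) ∣ x := by
  rw [AddSubgroup.mem_zmultiples_iff]
  constructor
  · rintro ⟨k, hk⟩
    have h1 : ((k * (d : ℤ) - x : ℤ) : ZMod n) = 0 := by
      push_cast
      rw [sub_eq_zero, ← hk, zsmul_eq_mul]
    rw [ZMod.intCast_zmod_eq_zero_iff_dvd] at h1
    have h2 : (d : ℤ) ∣ (n : ℤ) := Int.natCast_dvd_natCast.2 hd
    have h3 := dvd_sub (dvd_mul_left (d : ℤ) k) (h2.trans h1)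
    simpa using h3
  · rintro ⟨c, rfl⟩
    refine ⟨c, ?_⟩
    rw [zsmul_eq_mul]
    push_cast
    ring

lemma mem_zmul_nat {d : ℕ} (hd : d ∣ n) (k : ℕ) :
    ((k : ZMod n) ∈ zmultiples ((d : ZMod n))) ↔ d ∣ k := by
  have := mem_zmul_int hd (k : ℤ)
  rw [Int.natCast_dvd_natCast] at this
  simpa using this

lemma self_mem_zmul {d : ℕ} (hd : d ∣ n) :
    ((d : ZMod n) ∈ zmultiples ((d : ZMod n))) := (mem_zmul_nat hd d).2 dvd_rfl

lemma zmul_n_eq_bot : zmultiples ((n : ZMod n)) = ⊥ := by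
  rw [ZMod.natCast_self]
  exact AddSubgroup.zmultiples_zero_eq_bot

lemma zmul_one_eq_top : zmultiples (((1 : ℕ) : ZMod n)) = ⊤ := by
  rw [eq_top_iff]
  intro x _
  rw [AddSubgroup.mem_zmultiples_iff]
  refine ⟨(x.val : ℤ), ?_⟩
  rw [zsmul_eq_mul]
  push_cast
  rw [mul_one, ZMod.natCast_rightInverse x]

lemma exists_gen (S : AddSubgroup (ZMod n)) :
    ∃ d : ℕ, 0 < d ∧ d ∣ n ∧ S = zmultiples ((d : ZMod n)) := by
  obtain ⟨a, ha⟩ := Int.subgroup_cyclic (S.comap (Int.castAddHom (ZMod n)))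
  rw [← AddSubgroup.zmultiples_eq_closure] at ha
  have hsurj : Function.Surjective (Int.castAddHom (ZMod n)) := ZMod.intCast_surjective
  have hmap : S = AddSubgroup.map (Int.castAddHom (ZMod n))
      (S.comap (Int.castAddHom (ZMod n))) :=
    (AddSubgroup.map_comap_eq_self_of_surjective hsurj S).symm
  have hna : a ∣ (n : ℤ) := by
    have hn : (n : ℤ) ∈ S.comap (Int.castAddHom (ZMod n)) := by
      simp only [AddSubgroup.mem_comap, Int.coe_castAddHom, Int.cast_natCast,
        ZMod.natCast_self]
      exact S.zero_mem
    rw [ha, Int.mem_zmultiples_iff] at hn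
    exact hn
  rw [ha, AddMonoidHom.map_zmultiples] at hmap
  rcases eq_or_ne a 0 with rfl | h0
  · refine ⟨n, Nat.pos_of_ne_zero (NeZero.ne n), dvd_rfl, ?_⟩
    rw [zmul_n_eq_bot, hmap]
    simp
  · refine ⟨a.natAbs, Int.natAbs_pos.2 h0, by rw [← Int.natAbs_natCast n]; exact Int.natAbs_dvd_natAbs.2 hna, ?_⟩
    rw [hmap]
    have hca : ((Int.castAddHom (ZMod n)) a : ZMod n) = ((a : ℤ) : ZMod n) := rfl
    rw [hca]
    rcases Int.natAbs_eq a with h | h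
    · conv_lhs => rw [h]
      rw [Int.cast_natCast]
    · conv_lhs => rw [h]
      rw [Int.cast_neg, Int.cast_natCast, zmultiples_neg]

variable (n) in
noncomputable def gen (S : AddSubgroup (ZMod n)) : ℕ := (exists_gen S).choose

lemma gen_pos (S : AddSubgroup (ZMod n)) : 0 < gen n S := (exists_gen S).choose_spec.1

lemma gen_dvd (S : AddSubgroup (ZMod n)) : gen n S ∣ n := (exists_gen S).choose_spec.2.1

lemma zm_gen (S : AddSubgroup (ZMod n)) : S = zmultiples ((gen n S : ZMod n)) :=
  (exists_gen S).choose_spec.2.2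

lemma zm_inj {d e : ℕ} (hd : d ∣ n) (he : e ∣ n)
    (h : zmultiples ((d : ZMod n)) = zmultiples ((e : ZMod n))) : d = e := by
  have h1 : e ∣ d := (mem_zmul_nat he d).1 (h ▸ self_mem_zmul hd)
  have h2 : d ∣ e := (mem_zmul_nat hd e).1 (h ▸ self_mem_zmul he)
  exact Nat.dvd_antisymm h2 h1

lemma gen_zm {d : ℕ} (hd : d ∣ n) : gen n (zmultiples ((d : ZMod n))) = d :=
  zm_inj (gen_dvd _) hd (zm_gen _).symm

lemma gen_bot : gen n (⊥ : AddSubgroup (ZMod n)) = n := by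
  rw [← zmul_n_eq_bot]; exact gen_zm dvd_rfl

lemma gen_top : gen n (⊤ : AddSubgroup (ZMod n)) = 1 := by
  rw [← zmul_one_eq_top]; exact gen_zm (one_dvd n)

lemma eq_bot_iff_gen (S : AddSubgroup (ZMod n)) : S = ⊥ ↔ gen n S = n := by
  constructor
  · rintro rfl; exact gen_bot
  · intro h
    have := zm_gen S
    rw [h, zmul_n_eq_bot] at this
    exact this

lemma eq_top_iff_gen (S : AddSubgroup (ZMod n)) : S = ⊤ ↔ gen n S = 1 := by
  constructor
  · rintro rfl; exact gen_top
  · intro h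
    have := zm_gen S
    rw [h, zmul_one_eq_top] at this
    exact this

end ZModLemmas

end Stmt13
namespace Stmt13
section Dih
open DihedralGroup AddSubgroup
variable {n : ℕ}

lemma r_inv (k : ZMod n) : (r k)⁻¹ = r (-k) := by
  apply inv_eq_of_mul_eq_one_right
  rw [r_mul_r, add_neg_cancel, one_def]

lemma sr_inv (k : ZMod n) : (sr k)⁻¹ = sr k := by
  apply inv_eq_of_mul_eq_one_right
  rw [sr_mul_sr, sub_self, one_def]

/-- The set of rotation exponents of a subgroup of the dihedral group. -/
def DD (H : Subgroup (DihedralGroup n)) : AddSubgroup (ZMod n) where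
  carrier := {k | r k ∈ H}
  zero_mem' := by
    show r 0 ∈ H
    rw [← one_def]; exact H.one_mem
  add_mem' := by
    intro a b ha hb
    show r (a + b) ∈ H
    rw [← r_mul_r]; exact H.mul_mem ha hb
  neg_mem' := by
    intro a ha
    show r (-a) ∈ H
    rw [← r_inv]; exact H.inv_mem ha

@[simp] lemma mem_DD {H : Subgroup (DihedralGroup n)} {k : ZMod n} :
    k ∈ DD H ↔ r k ∈ H := Iff.rfl

/-- The "rotation" subgroup attached to `S`. -/
def rsub (S : AddSubgroup (ZMod n)) : Subgroup (DihedralGroup n) where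
  carrier := {x | ∃ k ∈ S, x = r k}
  one_mem' := ⟨0, S.zero_mem, one_def⟩
  mul_mem' := by
    rintro _ _ ⟨k, hk, rfl⟩ ⟨l, hl, rfl⟩
    exact ⟨k + l, S.add_mem hk hl, (r_mul_r k l).symm⟩
  inv_mem' := by
    rintro _ ⟨k, hk, rfl⟩
    exact ⟨-k, S.neg_mem hk, r_inv k⟩

@[simp] lemma r_mem_rsub {S : AddSubgroup (ZMod n)} {k : ZMod n} :
    r k ∈ rsub S ↔ k ∈ S := by
  constructor
  · rintro ⟨l, hl, he⟩
    obtain rfl : k = l := by injection he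
    exact hl
  · intro hk; exact ⟨k, hk, rfl⟩

@[simp] lemma sr_not_mem_rsub {S : AddSubgroup (ZMod n)} {k : ZMod n} :
    sr k ∉ rsub S := by
  rintro ⟨l, hl, he⟩
  simp at he

/-- The "dihedral" subgroup attached to `S` and a reflection offset `i`. -/
def dsub (S : AddSubgroup (ZMod n)) (i : ZMod n) : Subgroup (DihedralGroup n) where
  carrier := {x | (∃ k ∈ S, x = r k) ∨ ∃ k, k - i ∈ S ∧ x = sr k}
  one_mem' := Or.inl ⟨0, S.zero_mem, one_def⟩
  mul_mem' := by
    rintro _ _ (⟨k, hk, rfl⟩ | ⟨k, hk, rfl⟩) (⟨l, hl, rfl⟩ | ⟨l, hl, rfl⟩)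
    · exact Or.inl ⟨k + l, S.add_mem hk hl, (r_mul_r k l).symm⟩
    · refine Or.inr ⟨l - k, ?_, (r_mul_sr k l).symm⟩
      have h : l - k - i = (l - i) + (-k) := by ring
      rw [h]; exact S.add_mem hl (S.neg_mem hk)
    · refine Or.inr ⟨k + l, ?_, (sr_mul_r k l).symm⟩
      have h : k + l - i = (k - i) + l := by ring
      rw [h]; exact S.add_mem hk hl
    · refine Or.inl ⟨l - k, ?_, (sr_mul_sr k l).symm⟩
      have h : l - k = (l - i) - (k - i) := by ring
      rw [h]; exact S.sub_mem hl hk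
  inv_mem' := by
    rintro _ (⟨k, hk, rfl⟩ | ⟨k, hk, rfl⟩)
    · exact Or.inl ⟨-k, S.neg_mem hk, r_inv k⟩
    · exact Or.inr ⟨k, hk, sr_inv k⟩

@[simp] lemma r_mem_dsub {S : AddSubgroup (ZMod n)} {i k : ZMod n} :
    r k ∈ dsub S i ↔ k ∈ S := by
  constructor
  · rintro (⟨l, hl, he⟩ | ⟨l, hl, he⟩)
    · obtain rfl : k = l := by injection he
      exact hl
    · simp at he
  · intro hk; exact Or.inl ⟨k, hk, rfl⟩

@[simp] lemma sr_mem_dsub {S : AddSubgroup (ZMod n)} {i k : ZMod n} :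
    sr k ∈ dsub S i ↔ k - i ∈ S := by
  constructor
  · rintro (⟨l, hl, he⟩ | ⟨l, hl, he⟩)
    · simp at he
    · obtain rfl : k = l := by injection he
      exact hl
  · intro hk; exact Or.inr ⟨k, hk, rfl⟩

@[simp] lemma DD_rsub (S : AddSubgroup (ZMod n)) : DD (rsub S) = S := by
  ext k; simp

@[simp] lemma DD_dsub (S : AddSubgroup (ZMod n)) (i : ZMod n) : DD (dsub S i) = S := by
  ext k; simp

instance rsub_normal (S : AddSubgroup (ZMod n)) : (rsub S).Normal := by
  constructor
  rintro _ ⟨k, hk, rfl⟩ g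
  rcases g with j | j
  · have h : DihedralGroup.r j * r k * (r j)⁻¹ = r k := by
      rw [r_inv, r_mul_r, r_mul_r]
      congr 1; ring
    rw [h]
    exact ⟨k, hk, rfl⟩
  · have h : DihedralGroup.sr j * r k * (sr j)⁻¹ = r (-k) := by
      rw [sr_inv, sr_mul_r, sr_mul_sr]
      congr 1; ring
    rw [h]
    exact ⟨-k, S.neg_mem hk, rfl⟩

lemma mul_comm_of_normal {Γ : Type*} [Group Γ] (H K : Subgroup Γ) (hK : K.Normal) :
    (H : Set Γ) * (K : Set Γ) = (K : Set Γ) * (H : Set Γ) := by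
  haveI := hK
  rw [← Subgroup.mul_normal H K, ← Subgroup.normal_mul K H, sup_comm]

lemma sr_mem_of {H : Subgroup (DihedralGroup n)} {i : ZMod n} (hi : sr i ∈ H)
    {c : ZMod n} (hc : r c ∈ H) : sr (i + c) ∈ H := by
  have h := H.mul_mem hi hc
  rwa [sr_mul_r] at h

lemma rot_mem_of {H : Subgroup (DihedralGroup n)} {i a : ZMod n} (hi : sr i ∈ H)
    (ha : sr a ∈ H) : r (i - a) ∈ H := by
  have h := H.mul_mem ha hi
  rwa [sr_mul_sr] at h

lemma sr_mem_iff {H : Subgroup (DihedralGroup n)} {i : ZMod n} (hi : sr i ∈ H) (k : ZMod n) :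
    sr k ∈ H ↔ k - i ∈ DD H := by
  constructor
  · intro hk
    exact mem_DD.2 (rot_mem_of hk hi)
  · intro hk
    have h := sr_mem_of hi (mem_DD.1 hk)
    rwa [add_sub_cancel] at h

lemma eq_rsub_of {H : Subgroup (DihedralGroup n)} (h : ∀ k, sr k ∉ H) : H = rsub (DD H) := by
  ext x
  rcases x with k | k
  · simp
  · simp [h k]

lemma eq_dsub_of {H : Subgroup (DihedralGroup n)} {i : ZMod n} (hi : sr i ∈ H) :
    H = dsub (DD H) i := by
  ext x
  rcases x with k | k
  · simp
  · rw [sr_mem_dsub]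
    exact sr_mem_iff hi k

end Dih
end Stmt13
namespace Stmt13
section Perm
open DihedralGroup AddSubgroup
variable {n : ℕ}

lemma dih_mul_subset (H K : Subgroup (DihedralGroup n)) (i j u v : ZMod n)
    (hi : sr i ∈ H) (hj : sr j ∈ K) (hu : u ∈ DD H) (hv : v ∈ DD K)
    (huv : u + v = (j - i) + (j - i)) :
    (H : Set (DihedralGroup n)) * (K : Set (DihedralGroup n)) ⊆
      (K : Set (DihedralGroup n)) * (H : Set (DihedralGroup n)) := by
  rintro x hx
  rw [Set.mem_mul] at hx
  obtain ⟨h, hh, k, hk, rfl⟩ := hx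
  rw [SetLike.mem_coe] at hh hk
  rcases h with a | a <;> rcases k with b | b
  · have he : DihedralGroup.r a * r b = r b * r a := by
      rw [r_mul_r, r_mul_r, add_comm]
    rw [he]
    exact Set.mul_mem_mul hk hh
  · have he : DihedralGroup.r a * sr b = sr b * r (-a) := by
      rw [r_mul_sr, sr_mul_r]
      congr 1; ring
    rw [he]
    exact Set.mul_mem_mul hk ((DD H).neg_mem (mem_DD.2 hh))
  · have he : DihedralGroup.sr a * r b = r (-b) * sr a := by
      rw [sr_mul_r, r_mul_sr]
      congr 1; ring
    rw [he]
    exact Set.mul_mem_mul ((DD K).neg_mem (mem_DD.2 hk)) hh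
  · -- reflections: sr a * sr b = r (b - a)
    have hbK : r (j - b) ∈ K := rot_mem_of hj hk
    have haH : r (i - a) ∈ H := rot_mem_of hi hh
    have hβ : sr (j + ((j - b) + (-v))) ∈ K :=
      sr_mem_of hj (K.mul_mem hbK ((DD K).neg_mem hv))
    have hα : sr (i + ((i - a) + u)) ∈ H :=
      sr_mem_of hi (H.mul_mem haH hu)
    have he : DihedralGroup.sr a * sr b =
        sr (j + ((j - b) + (-v))) * sr (i + ((i - a) + u)) := by
      rw [sr_mul_sr, sr_mul_sr]
      congr 1
      linear_combination -huv
    rw [he]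
    exact Set.mul_mem_mul hβ hα

lemma dih_perm (H K : Subgroup (DihedralGroup n)) (i j u v : ZMod n)
    (hi : sr i ∈ H) (hj : sr j ∈ K) (hu : u ∈ DD H) (hv : v ∈ DD K)
    (huv : u + v = (j - i) + (j - i)) :
    (H : Set (DihedralGroup n)) * (K : Set (DihedralGroup n)) =
      (K : Set (DihedralGroup n)) * (H : Set (DihedralGroup n)) :=
  subset_antisymm (dih_mul_subset H K i j u v hi hj hu hv huv)
    (dih_mul_subset K H j i (-v) (-u) hj hi ((DD K).neg_mem hv) ((DD H).neg_mem hu)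
      (by linear_combination -huv))

lemma dsub_perm (S T : AddSubgroup (ZMod n)) (i j : ZMod n)
    (hi : i + i ∈ S) (hj : j + j ∈ T) :
    ((dsub S i : Subgroup (DihedralGroup n)) : Set (DihedralGroup n)) * (dsub T j : Set _) =
      ((dsub T j : Subgroup (DihedralGroup n)) : Set _) * (dsub S i : Set _) := by
  refine dih_perm _ _ i j (-(i + i)) (j + j) ?_ ?_ ?_ ?_ (by ring)
  · rw [sr_mem_dsub, sub_self]; exact S.zero_mem
  · rw [sr_mem_dsub, sub_self]; exact T.zero_mem
  · exact r_mem_dsub.2 (S.neg_mem hi)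
  · exact r_mem_dsub.2 hj

/-- From adjacency (permuting, distinct) of two "dihedral type" subgroups with the same
rotation part we extract the key divisibility data. -/
lemma adj_delta (H K : Subgroup (DihedralGroup n)) (hne : H ≠ K)
    (hperm : (H : Set (DihedralGroup n)) * K = (K : Set (DihedralGroup n)) * H)
    (i j : ZMod n) (hi : sr i ∈ H) (hj : sr j ∈ K) (hS : DD H = DD K) :
    ((j - i) + (j - i) ∈ DD H) ∧ (j - i) ∉ DD H := by
  have hHK : (j - i) ∈ DD H → H = K := by
    intro hΔ
    have h1 := eq_dsub_of hi
    have h2 := eq_dsub_of hj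
    rw [h1, h2, ← hS]
    ext x
    rcases x with k | k
    · simp
    · rw [sr_mem_dsub, sr_mem_dsub]
      constructor
      · intro h
        have := (DD H).sub_mem h hΔ
        have he : k - i - (j - i) = k - j := by ring
        rwa [he] at this
      · intro h
        have := (DD H).add_mem h hΔ
        have he : k - j + (j - i) = k - i := by ring
        rwa [he] at this
  have hnot : (j - i) ∉ DD H := fun hΔ => hne (hHK hΔ)
  refine ⟨?_, hnot⟩
  have h2 : DihedralGroup.sr j * sr i ∈ (H : Set (DihedralGroup n)) * K := by
    rw [hperm]
    exact Set.mul_mem_mul hj hi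
  obtain ⟨h2h, hh2, k2, hk2, heq⟩ := Set.mem_mul.1 h2
  rw [SetLike.mem_coe] at hh2 hk2
  have h3 : (DihedralGroup.sr i * h2h) * (k2 * sr j) ∈ (H : Set (DihedralGroup n)) * K :=
    Set.mul_mem_mul (H.mul_mem hi hh2) (K.mul_mem hk2 hj)
  have h4 : (DihedralGroup.sr i * h2h) * (k2 * sr j) = r ((j - i) + (j - i)) := by
    have hassoc : (DihedralGroup.sr i * h2h) * (k2 * sr j) =
        DihedralGroup.sr i * ((h2h * k2) * sr j) := by
      group
    rw [hassoc, heq, sr_mul_sr, r_mul_sr, sr_mul_sr]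
    congr 1; ring
  rw [h4] at h3
  obtain ⟨h5, hh5, k5, hk5, heq5⟩ := Set.mem_mul.1 h3
  rw [SetLike.mem_coe] at hh5 hk5
  rcases h5 with a | a <;> rcases k5 with b | b
  · rw [r_mul_r] at heq5
    obtain he : a + b = (j - i) + (j - i) := by injection heq5
    rw [← he]
    exact (DD H).add_mem (mem_DD.2 hh5) (hS ▸ mem_DD.2 hk5)
  · rw [r_mul_sr] at heq5; simp at heq5
  · rw [sr_mul_r] at heq5; simp at heq5
  · rw [sr_mul_sr] at heq5
    obtain he : b - a = (j - i) + (j - i) := by injection heq5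
    exfalso
    apply hnot
    have haH : r (i - a) ∈ H := rot_mem_of hi hh5
    have hbK : r (j - b) ∈ K := rot_mem_of hj hk5
    have hmem : (i - a) - (j - b) ∈ DD H :=
      (DD H).sub_mem (mem_DD.2 haH) (hS ▸ mem_DD.2 hbK)
    have he2 : (i - a) - (j - b) = j - i := by linear_combination he
    rwa [he2] at hmem

end Perm
end Stmt13
namespace Stmt13
section EH
open DihedralGroup AddSubgroup
variable {n : ℕ} [NeZero n]

/-- The minimal natural reflection exponent of a subgroup. -/
noncomputable def eH (H : Subgroup (DihedralGroup n)) : ℕ :=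
  sInf {k : ℕ | sr ((k : ℕ) : ZMod n) ∈ H}

lemma eH_set_nonempty {H : Subgroup (DihedralGroup n)} {i : ZMod n} (hi : sr i ∈ H) :
    {k : ℕ | sr ((k : ℕ) : ZMod n) ∈ H}.Nonempty := by
  refine ⟨i.val, ?_⟩
  show sr ((i.val : ℕ) : ZMod n) ∈ H
  rwa [ZMod.natCast_rightInverse i]

lemma eH_mem {H : Subgroup (DihedralGroup n)} {i : ZMod n} (hi : sr i ∈ H) :
    sr ((eH H : ℕ) : ZMod n) ∈ H :=
  Nat.sInf_mem (eH_set_nonempty hi)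

lemma eH_lt {H : Subgroup (DihedralGroup n)} {i : ZMod n} (hi : sr i ∈ H) :
    eH H < gen n (DD H) := by
  set d := gen n (DD H) with hd
  by_contra hge
  push_neg at hge
  have hdH : r ((d : ZMod n)) ∈ H := by
    have h1 : ((d : ZMod n)) ∈ DD H := by
      rw [zm_gen (DD H), ← hd]
      exact self_mem_zmul (gen_dvd _)
    exact mem_DD.1 h1
  have hnegd : r (-(d : ZMod n)) ∈ H := by
    have := H.inv_mem hdH
    rwa [r_inv] at this
  have hmem : (eH H - d) ∈ {k : ℕ | sr ((k : ℕ) : ZMod n) ∈ H} := by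
    show sr (((eH H - d : ℕ) : ZMod n)) ∈ H
    have hc : ((eH H - d : ℕ) : ZMod n) = ((eH H : ℕ) : ZMod n) + (-(d : ZMod n)) := by
      push_cast [Nat.cast_sub hge]
      ring
    rw [hc]
    exact sr_mem_of (eH_mem hi) hnegd
  have hle := Nat.sInf_le hmem
  have hdpos : 0 < d := gen_pos _
  change eH H ≤ eH H - d at hle
  omega

lemma nat_half {d v : ℕ} (hdpos : 0 < d) (hd : d ∣ 2 * v) (hnd : ¬ d ∣ v) :
    2 ∣ d ∧ v % d = d / 2 := by
  obtain ⟨t, ht⟩ := hd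
  rcases Nat.even_or_odd t with ⟨u, hu⟩ | ⟨u, hu⟩
  · exfalso
    apply hnd
    refine ⟨u, ?_⟩
    have hdtu : d * t = 2 * (d * u) := by rw [hu]; ring
    omega
  · have hdtu : d * t = 2 * (d * u) + d := by rw [hu]; ring
    have h2d : 2 ∣ d := by omega
    refine ⟨h2d, ?_⟩
    have hveq : v = d * u + d / 2 := by omega
    rw [hveq, Nat.mul_add_mod]
    exact Nat.mod_eq_of_lt (by omega)

/-- The central contradiction: two distinct permuting "dihedral" subgroups with the same
rotation part must have reflection offsets in *different* halves. -/
lemma same_S_contra (H K : Subgroup (DihedralGroup n)) (hne : H ≠ K)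
    (hperm : (H : Set (DihedralGroup n)) * K = (K : Set (DihedralGroup n)) * H)
    (i j : ZMod n) (hi : sr i ∈ H) (hj : sr j ∈ K) (hS : DD H = DD K)
    (hiff : ((2 ∣ gen n (DD H) ∧ eH H < gen n (DD H) / 2) ↔
      (2 ∣ gen n (DD K) ∧ eH K < gen n (DD K) / 2))) : False := by
  obtain ⟨hΔ2, hΔn⟩ := adj_delta H K hne hperm i j hi hj hS
  set d := gen n (DD H) with hd
  have hdn : d ∣ n := gen_dvd _
  have hdpos : 0 < d := gen_pos _
  set Δ : ZMod n := j - i with hΔdef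
  set v : ℕ := Δ.val with hv
  have hΔcast : ((v : ℕ) : ZMod n) = Δ := ZMod.natCast_rightInverse Δ
  -- divisibility facts
  have hdd1 : d ∣ 2 * v := by
    have h1 : ((2 * v : ℕ) : ZMod n) ∈ zmultiples ((d : ZMod n)) := by
      rw [← zm_gen (DD H), ← hd] at *
      push_cast
      rw [hΔcast]
      have : Δ + Δ ∈ DD H := hΔ2
      convert this using 1
      ring
    exact (mem_zmul_nat hdn _).1 h1
  have hdd2 : ¬ d ∣ v := by
    intro hdvd
    apply hΔn
    rw [zm_gen (DD H), ← hd, ← hΔcast]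
    exact (mem_zmul_nat hdn _).2 hdvd
  obtain ⟨h2d, hvmod⟩ := nat_half hdpos hdd1 hdd2
  obtain ⟨c, hc⟩ := h2d
  -- the relation between eH H and eH K
  have hgenK : gen n (DD K) = d := by rw [← hS, hd]
  have heHm : sr ((eH H : ℕ) : ZMod n) ∈ H := eH_mem hi
  have heKm : sr ((eH K : ℕ) : ZMod n) ∈ K := eH_mem hj
  have h1 : ((eH H : ℕ) : ZMod n) - i ∈ DD H := (sr_mem_iff hi _).1 heHm
  have h2 : ((eH K : ℕ) : ZMod n) - j ∈ DD H := hS ▸ (sr_mem_iff hj _).1 heKm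
  have h3 : (((eH H : ℕ) : ZMod n) - i) - (((eH K : ℕ) : ZMod n) - j) ∈ DD H :=
    (DD H).sub_mem h1 h2
  have h4 : (((eH H + v : ℕ) : ℤ) - ((eH K : ℕ) : ℤ) : ℤ) =
      ((eH H : ℤ) + (v : ℤ) - (eH K : ℤ)) := by push_cast; ring
  have h5 : (((eH H : ℤ) + (v : ℤ) - (eH K : ℤ) : ℤ) : ZMod n) ∈ zmultiples ((d : ZMod n)) := by
    rw [← zm_gen (DD H)]
    convert h3 using 1
    push_cast
    rw [hΔcast, hΔdef]
    ring
  have h6 : (d : ℤ) ∣ ((eH H : ℤ) + (v : ℤ) - (eH K : ℤ)) := (mem_zmul_int hdn _).1 h5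
  -- translate everything to arithmetic and finish with omega
  have hlH : eH H < d := eH_lt hi
  have hlK : eH K < d := by
    have := eH_lt hj
    rwa [hgenK] at this
  obtain ⟨q, hq⟩ := h6
  have hvd : v = d * (v / d) + c := by
    conv_lhs => rw [← Nat.div_add_mod v d]
    omega
  rw [hgenK] at hiff
  -- now: (eH H : ℤ) + v - eH K = d * q, v = d*(v/d) + c, d = 2c, bounds
  have hq' : (eH H : ℤ) + (d : ℤ) * ((v / d : ℕ) : ℤ) + (c : ℤ) - (eH K : ℤ) =
      (d : ℤ) * q := by
    rw [← hq]
    have hcast : ((v : ℕ) : ℤ) = (d : ℤ) * ((v / d : ℕ) : ℤ) + (c : ℤ) := by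
      exact_mod_cast congrArg (Nat.cast : ℕ → ℤ) hvd
    linear_combination -hcast
  -- let Q := q - v/d ; then eH H + c - eH K = d * Q with -d < lhs < 2d
  set Q : ℤ := q - ((v / d : ℕ) : ℤ) with hQ
  have hmain : (eH H : ℤ) + (c : ℤ) - (eH K : ℤ) = (d : ℤ) * Q := by
    rw [hQ]
    linear_combination hq'
  have hdz : (0 : ℤ) < (d : ℤ) := by exact_mod_cast hdpos
  have hb1 : -(d : ℤ) < (eH H : ℤ) + (c : ℤ) - (eH K : ℤ) := by
    have : (0 : ℤ) ≤ (eH H : ℤ) := Int.natCast_nonneg _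
    have h2 : (0 : ℤ) ≤ (c : ℤ) := Int.natCast_nonneg _
    have h3 : (eH K : ℤ) < d := by exact_mod_cast hlK
    omega
  have hb2 : (eH H : ℤ) + (c : ℤ) - (eH K : ℤ) < 2 * (d : ℤ) := by
    have h3 : (eH H : ℤ) < d := by exact_mod_cast hlH
    have h4 : (c : ℤ) ≤ d := by
      have : c ≤ d := by omega
      exact_mod_cast this
    have : (0 : ℤ) ≤ (eH K : ℤ) := Int.natCast_nonneg _
    omega
  have hQcases : Q = 0 ∨ Q = 1 := by
    rcases lt_trichotomy Q 0 with h | h | h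
    · exfalso
      have : (d : ℤ) * Q ≤ (d : ℤ) * (-1) := by
        apply mul_le_mul_of_nonneg_left _ (le_of_lt hdz)
        omega
      omega
    · left; exact h
    · rcases lt_or_ge Q 2 with h2 | h2
      · right; omega
      · exfalso
        have : (d : ℤ) * 2 ≤ (d : ℤ) * Q := by
          apply mul_le_mul_of_nonneg_left h2 (le_of_lt hdz)
        omega
  -- d = 2c with c = d/2
  have hcd2 : c = d / 2 := by omega
  rw [← hcd2] at hiff
  rcases hQcases with h | h <;> rw [h] at hmain <;> omega
end EH
end Stmt13
namespace Stmt13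
section Color
open DihedralGroup AddSubgroup
variable (n : ℕ) [NeZero n]

abbrev V := {H : Subgroup (DihedralGroup n) // H ≠ ⊥ ∧ H ≠ ⊤}

/-- The colour palette. -/
abbrev Cols := {S : AddSubgroup (ZMod n) // S ≠ ⊥} ⊕
  ({S : AddSubgroup (ZMod n) // S ≠ ⊤} ⊕ {S : AddSubgroup (ZMod n) // 2 ∣ gen n S})

variable {n}

instance : Finite (AddSubgroup (ZMod n)) := by
  have hinj : Function.Injective (fun S : AddSubgroup (ZMod n) => (S : Set (ZMod n))) :=
    fun a b h => SetLike.ext' h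
  exact Finite.of_injective _ hinj

lemma DD_ne_bot {H : Subgroup (DihedralGroup n)} (hB : H ≠ ⊥) (h : ∀ k, sr k ∉ H) :
    DD H ≠ ⊥ := by
  intro hDD
  apply hB
  rw [Subgroup.eq_bot_iff_forall]
  intro x hx
  rcases x with k | k
  · have : k ∈ DD H := hx
    rw [hDD, AddSubgroup.mem_bot] at this
    rw [this, one_def]
  · exact absurd hx (h k)

lemma DD_ne_top {H : Subgroup (DihedralGroup n)} (hT : H ≠ ⊤) {i : ZMod n} (hi : sr i ∈ H) :
    DD H ≠ ⊤ := by
  intro hDD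
  apply hT
  rw [Subgroup.eq_top_iff']
  intro x
  rcases x with k | k
  · exact mem_DD.1 (by rw [hDD]; trivial)
  · rw [sr_mem_iff hi, hDD]; trivial

open Classical in
noncomputable def col (v : V n) : Cols n :=
  if h : ∀ k, sr k ∉ v.1 then Sum.inl ⟨DD v.1, DD_ne_bot v.2.1 h⟩
  else if h2 : 2 ∣ gen n (DD v.1) ∧ eH v.1 < gen n (DD v.1) / 2 then
    Sum.inr (Sum.inr ⟨DD v.1, h2.1⟩)
  else
    Sum.inr (Sum.inl ⟨DD v.1, by
      push_neg at h
      obtain ⟨i, hi⟩ := h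
      exact DD_ne_top v.2.2 hi⟩)

lemma col_valid {v w : V n} (hadj : (permGraph (DihedralGroup n)).Adj v w) :
    col v ≠ col w := by
  obtain ⟨hne, hperm⟩ := hadj
  have hne1 : v.1 ≠ w.1 := fun h => hne (Subtype.ext h)
  intro hcol
  unfold col at hcol
  by_cases hv : ∀ k, sr k ∉ v.1 <;> by_cases hw : ∀ k, sr k ∉ w.1
  · rw [dif_pos hv, dif_pos hw] at hcol
    have hDD : DD v.1 = DD w.1 := congrArg Subtype.val (Sum.inl.inj hcol)
    exact hne1 (by rw [eq_rsub_of hv, eq_rsub_of hw, hDD])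
  · rw [dif_pos hv, dif_neg hw] at hcol
    split_ifs at hcol <;> simp at hcol
  · rw [dif_neg hv, dif_pos hw] at hcol
    split_ifs at hcol <;> simp at hcol
  · rw [dif_neg hv, dif_neg hw] at hcol
    have hv' := hv; have hw' := hw
    push_neg at hv' hw'
    obtain ⟨i, hi⟩ := hv'
    obtain ⟨j, hj⟩ := hw'
    by_cases h2v : 2 ∣ gen n (DD v.1) ∧ eH v.1 < gen n (DD v.1) / 2 <;>
      by_cases h2w : 2 ∣ gen n (DD w.1) ∧ eH w.1 < gen n (DD w.1) / 2
    · rw [dif_pos h2v, dif_pos h2w] at hcol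
      have hDD : DD v.1 = DD w.1 :=
        congrArg Subtype.val (Sum.inr.inj (Sum.inr.inj hcol))
      exact same_S_contra v.1 w.1 hne1 hperm i j hi hj hDD (iff_of_true h2v h2w)
    · rw [dif_pos h2v, dif_neg h2w] at hcol
      simp at hcol
    · rw [dif_neg h2v, dif_pos h2w] at hcol
      simp at hcol
    · rw [dif_neg h2v, dif_neg h2w] at hcol
      have hDD : DD v.1 = DD w.1 :=
        congrArg Subtype.val (Sum.inl.inj (Sum.inr.inj hcol))
      exact same_S_contra v.1 w.1 hne1 hperm i j hi hj hDD (iff_of_false h2v h2w)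

noncomputable def coloring : (permGraph (DihedralGroup n)).Coloring (Cols n) :=
  SimpleGraph.Coloring.mk col (fun hadj => col_valid hadj)

noncomputable def equivB1 :
    {S : AddSubgroup (ZMod n) // S ≠ ⊥} ≃ {d : ℕ // d ∈ n.divisors.erase n} where
  toFun S := ⟨gen n S.1, by
    rw [Finset.mem_erase]
    exact ⟨fun h => S.2 ((eq_bot_iff_gen S.1).2 h),
      Nat.mem_divisors.2 ⟨gen_dvd _, NeZero.ne n⟩⟩⟩
  invFun d := ⟨zmultiples ((d.1 : ZMod n)), by
    intro hbot
    have hd := Finset.mem_erase.1 d.2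
    have h1 : gen n (zmultiples ((d.1 : ZMod n))) = n := (eq_bot_iff_gen _).1 hbot
    rw [gen_zm (Nat.mem_divisors.1 hd.2).1] at h1
    exact hd.1 h1⟩
  left_inv S := Subtype.ext (zm_gen S.1).symm
  right_inv d := Subtype.ext (gen_zm (Nat.mem_divisors.1 (Finset.mem_erase.1 d.2).2).1)

noncomputable def equivB2 :
    {S : AddSubgroup (ZMod n) // S ≠ ⊤} ≃ {d : ℕ // d ∈ n.divisors.erase 1} where
  toFun S := ⟨gen n S.1, by
    rw [Finset.mem_erase]
    exact ⟨fun h => S.2 ((eq_top_iff_gen S.1).2 h),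
      Nat.mem_divisors.2 ⟨gen_dvd _, NeZero.ne n⟩⟩⟩
  invFun d := ⟨zmultiples ((d.1 : ZMod n)), by
    intro htop
    have hd := Finset.mem_erase.1 d.2
    have h1 : gen n (zmultiples ((d.1 : ZMod n))) = 1 := (eq_top_iff_gen _).1 htop
    rw [gen_zm (Nat.mem_divisors.1 hd.2).1] at h1
    exact hd.1 h1⟩
  left_inv S := Subtype.ext (zm_gen S.1).symm
  right_inv d := Subtype.ext (gen_zm (Nat.mem_divisors.1 (Finset.mem_erase.1 d.2).2).1)

noncomputable def equivB3 :
    {S : AddSubgroup (ZMod n) // 2 ∣ gen n S} ≃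
      {d : ℕ // d ∈ n.divisors.filter (fun d => 2 ∣ d)} where
  toFun S := ⟨gen n S.1, by
    rw [Finset.mem_filter]
    exact ⟨Nat.mem_divisors.2 ⟨gen_dvd _, NeZero.ne n⟩, S.2⟩⟩
  invFun d := ⟨zmultiples ((d.1 : ZMod n)), by
    have hd := Finset.mem_filter.1 d.2
    rw [gen_zm (Nat.mem_divisors.1 hd.1).1]
    exact hd.2⟩
  left_inv S := Subtype.ext (zm_gen S.1).symm
  right_inv d := Subtype.ext (gen_zm (Nat.mem_divisors.1 (Finset.mem_filter.1 d.2).1).1)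

lemma card_cols : Nat.card (Cols n) =
    (n.divisors.erase n).card +
      ((n.divisors.erase 1).card + (n.divisors.filter (fun d => 2 ∣ d)).card) := by
  rw [Nat.card_sum, Nat.card_sum]
  rw [Nat.card_congr equivB1, Nat.card_congr equivB2, Nat.card_congr equivB3]
  have h1 : Nat.card {d : ℕ // d ∈ n.divisors.erase n} = (n.divisors.erase n).card := by
    rw [Nat.card_eq_fintype_card, Fintype.card_coe]
  have h2 : Nat.card {d : ℕ // d ∈ n.divisors.erase 1} = (n.divisors.erase 1).card := by
    rw [Nat.card_eq_fintype_card, Fintype.card_coe]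
  have h3 : Nat.card {d : ℕ // d ∈ n.divisors.filter (fun d => 2 ∣ d)} =
      (n.divisors.filter (fun d => 2 ∣ d)).card := by
    rw [Nat.card_eq_fintype_card, Fintype.card_coe]
  rw [h1, h2, h3]

end Color
end Stmt13
namespace Stmt13
section Clique
open DihedralGroup AddSubgroup
variable {n : ℕ} [NeZero n]

noncomputable instance : DecidableEq (Subgroup (DihedralGroup n)) := Classical.decEq _

lemma rsub_ne_top (S : AddSubgroup (ZMod n)) : rsub S ≠ ⊤ := by
  intro h
  have hmem : sr (0 : ZMod n) ∈ rsub S := by rw [h]; trivial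
  exact sr_not_mem_rsub hmem

lemma rsub_zm_ne_bot {d : ℕ} (hd : d ∣ n) (hdn : d ≠ n) :
    rsub (zmultiples ((d : ZMod n))) ≠ ⊥ := by
  intro h
  have hmem : r ((d : ZMod n)) ∈ rsub (zmultiples ((d : ZMod n))) :=
    r_mem_rsub.2 (self_mem_zmul hd)
  rw [h, Subgroup.mem_bot, one_def] at hmem
  have : (d : ZMod n) = 0 := by injection hmem
  rw [ZMod.natCast_eq_zero_iff] at this
  exact hdn (Nat.dvd_antisymm hd this)

lemma dsub_ne_bot (S : AddSubgroup (ZMod n)) (i : ZMod n) : dsub S i ≠ ⊥ := by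
  intro h
  have hmem : sr i ∈ dsub S i := sr_mem_dsub.2 (by rw [sub_self]; exact S.zero_mem)
  rw [h, Subgroup.mem_bot, one_def] at hmem
  cases hmem

lemma dsub_ne_top {S : AddSubgroup (ZMod n)} (hS : S ≠ ⊤) (i : ZMod n) : dsub S i ≠ ⊤ := by
  intro h
  apply hS
  rw [AddSubgroup.eq_top_iff']
  intro k
  exact r_mem_dsub.1 (by rw [h]; trivial)

lemma zm_ne_top {d : ℕ} (hd : d ∣ n) (hdne : d ≠ 1) :
    zmultiples ((d : ZMod n)) ≠ ⊤ := by
  intro h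
  exact hdne (by rw [← gen_zm hd, (eq_top_iff_gen _).1 h])

lemma rsub_ne_dsub (S T : AddSubgroup (ZMod n)) (i : ZMod n) : rsub S ≠ dsub T i := by
  intro h
  have hmem : sr i ∈ dsub T i := sr_mem_dsub.2 (by rw [sub_self]; exact T.zero_mem)
  rw [← h] at hmem
  exact sr_not_mem_rsub hmem

lemma half_mem {d : ℕ} (hd : d ∣ n) (h2 : 2 ∣ d) :
    ((d / 2 : ℕ) : ZMod n) + ((d / 2 : ℕ) : ZMod n) ∈ zmultiples ((d : ZMod n)) := by
  have h : ((d / 2 : ℕ) : ZMod n) + ((d / 2 : ℕ) : ZMod n) = ((d : ℕ) : ZMod n) := by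
    rw [← Nat.cast_add]
    congr 1
    omega
  rw [h]
  exact self_mem_zmul hd

variable (n)

open Classical in
/-- the three families of clique vertices -/
noncomputable def F1 : Finset (V n) :=
  (n.divisors.erase n).attach.image fun d =>
    (⟨rsub (zmultiples ((d.1 : ZMod n))),
      rsub_zm_ne_bot (Nat.mem_divisors.1 (Finset.mem_erase.1 d.2).2).1
        (Finset.mem_erase.1 d.2).1,
      rsub_ne_top _⟩ : V n)

open Classical in
noncomputable def F2 : Finset (V n) :=
  (n.divisors.erase 1).attach.image fun d =>
    (⟨dsub (zmultiples ((d.1 : ZMod n))) 0,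
      dsub_ne_bot _ _,
      dsub_ne_top (zm_ne_top (Nat.mem_divisors.1 (Finset.mem_erase.1 d.2).2).1
        (Finset.mem_erase.1 d.2).1) _⟩ : V n)

open Classical in
noncomputable def F3 : Finset (V n) :=
  (n.divisors.filter (fun d => 2 ∣ d)).attach.image fun d =>
    (⟨dsub (zmultiples ((d.1 : ZMod n))) ((d.1 / 2 : ℕ) : ZMod n),
      dsub_ne_bot _ _,
      dsub_ne_top (zm_ne_top (Nat.mem_divisors.1 (Finset.mem_filter.1 d.2).1).1
        (by
          have := (Finset.mem_filter.1 d.2).2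
          have := Nat.pos_of_mem_divisors (Finset.mem_filter.1 d.2).1
          omega)) _⟩ : V n)

open Classical in
noncomputable def cliq : Finset (V n) := F1 n ∪ (F2 n ∪ F3 n)

variable {n}

lemma zm_inj_div {d e : ℕ} (hd : d ∈ n.divisors) (he : e ∈ n.divisors)
    (h : zmultiples ((d : ZMod n)) = zmultiples ((e : ZMod n))) : d = e :=
  zm_inj (Nat.mem_divisors.1 hd).1 (Nat.mem_divisors.1 he).1 h

lemma card_F1 : (F1 n).card = (n.divisors.erase n).card := by
  rw [F1, Finset.card_image_of_injective _ ?_, Finset.card_attach]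
  intro a b hab
  have h1 : rsub (zmultiples ((a.1 : ZMod n))) = rsub (zmultiples ((b.1 : ZMod n))) :=
    congrArg Subtype.val hab
  have h2 := congrArg DD h1
  rw [DD_rsub, DD_rsub] at h2
  exact Subtype.ext (zm_inj_div (Finset.mem_of_mem_erase a.2) (Finset.mem_of_mem_erase b.2) h2)

lemma card_F2 : (F2 n).card = (n.divisors.erase 1).card := by
  rw [F2, Finset.card_image_of_injective _ ?_, Finset.card_attach]
  intro a b hab
  have h1 : dsub (zmultiples ((a.1 : ZMod n))) 0 = dsub (zmultiples ((b.1 : ZMod n))) 0 :=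
    congrArg Subtype.val hab
  have h2 := congrArg DD h1
  rw [DD_dsub, DD_dsub] at h2
  exact Subtype.ext (zm_inj_div (Finset.mem_of_mem_erase a.2) (Finset.mem_of_mem_erase b.2) h2)

lemma card_F3 : (F3 n).card = (n.divisors.filter (fun d => 2 ∣ d)).card := by
  rw [F3, Finset.card_image_of_injective _ ?_, Finset.card_attach]
  intro a b hab
  have h1 : dsub (zmultiples ((a.1 : ZMod n))) ((a.1 / 2 : ℕ) : ZMod n) =
      dsub (zmultiples ((b.1 : ZMod n))) ((b.1 / 2 : ℕ) : ZMod n) :=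
    congrArg Subtype.val hab
  have h2 := congrArg DD h1
  rw [DD_dsub, DD_dsub] at h2
  exact Subtype.ext (zm_inj_div (Finset.mem_filter.1 a.2).1 (Finset.mem_filter.1 b.2).1 h2)

lemma disj_F1_F2 : Disjoint (F1 n) (F2 n) := by
  rw [Finset.disjoint_left]
  rintro x hx1 hx2
  rw [F1, Finset.mem_image] at hx1
  rw [F2, Finset.mem_image] at hx2
  obtain ⟨a, _, ha⟩ := hx1
  obtain ⟨b, _, hb⟩ := hx2
  have := congrArg Subtype.val (ha.trans hb.symm)
  exact rsub_ne_dsub _ _ _ this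

lemma disj_F1_F3 : Disjoint (F1 n) (F3 n) := by
  rw [Finset.disjoint_left]
  rintro x hx1 hx2
  rw [F1, Finset.mem_image] at hx1
  rw [F3, Finset.mem_image] at hx2
  obtain ⟨a, _, ha⟩ := hx1
  obtain ⟨b, _, hb⟩ := hx2
  have := congrArg Subtype.val (ha.trans hb.symm)
  exact rsub_ne_dsub _ _ _ this

lemma disj_F2_F3 : Disjoint (F2 n) (F3 n) := by
  rw [Finset.disjoint_left]
  rintro x hx1 hx2
  rw [F2, Finset.mem_image] at hx1
  rw [F3, Finset.mem_image] at hx2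
  obtain ⟨a, _, ha⟩ := hx1
  obtain ⟨b, _, hb⟩ := hx2
  have h1 : dsub (zmultiples ((a.1 : ZMod n))) 0 =
      dsub (zmultiples ((b.1 : ZMod n))) ((b.1 / 2 : ℕ) : ZMod n) :=
    congrArg Subtype.val (ha.trans hb.symm)
  have h2 := congrArg DD h1
  rw [DD_dsub, DD_dsub] at h2
  have hab : a.1 = b.1 :=
    zm_inj_div (Finset.mem_of_mem_erase a.2) (Finset.mem_filter.1 b.2).1 h2
  have hb2 : 2 ∣ b.1 := (Finset.mem_filter.1 b.2).2
  have hbpos : 0 < b.1 := Nat.pos_of_mem_divisors (Finset.mem_filter.1 b.2).1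
  have hbn : b.1 ∣ n := (Nat.mem_divisors.1 (Finset.mem_filter.1 b.2).1).1
  have hmem : sr ((b.1 / 2 : ℕ) : ZMod n) ∈ dsub (zmultiples ((b.1 : ZMod n)))
      ((b.1 / 2 : ℕ) : ZMod n) := sr_mem_dsub.2 (by rw [sub_self]; exact zero_mem _)
  rw [← h1] at hmem
  rw [sr_mem_dsub, sub_zero, hab] at hmem
  rw [mem_zmul_nat hbn] at hmem
  have := Nat.le_of_dvd (by omega) hmem
  omega

lemma cliq_card : (cliq n).card =
    (n.divisors.erase n).card +
      ((n.divisors.erase 1).card + (n.divisors.filter (fun d => 2 ∣ d)).card) := by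
  rw [cliq, Finset.card_union_of_disjoint, Finset.card_union_of_disjoint disj_F2_F3,
    card_F1, card_F2, card_F3]
  rw [Finset.disjoint_union_right]
  exact ⟨disj_F1_F2, disj_F1_F3⟩

lemma cliq_isClique : (permGraph (DihedralGroup n)).IsClique (cliq n) := by
  intro x hx y hy hne
  refine ⟨hne, ?_⟩
  have hne1 : x.1 ≠ y.1 := fun h => hne (Subtype.ext h)
  -- characterize membership
  simp only [cliq, Finset.coe_union, Set.mem_union, Finset.mem_coe] at hx hy
  have hchar : ∀ z : V n, (z ∈ F1 n ∨ z ∈ F2 n ∨ z ∈ F3 n) →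
      (∃ S : AddSubgroup (ZMod n), z.1 = rsub S) ∨
      (∃ (d : ℕ) (i : ZMod n), d ∣ n ∧ i + i ∈ zmultiples ((d : ZMod n)) ∧
        z.1 = dsub (zmultiples ((d : ZMod n))) i) := by
    rintro z (hz | hz | hz)
    · rw [F1, Finset.mem_image] at hz
      obtain ⟨a, _, ha⟩ := hz
      exact Or.inl ⟨_, (congrArg Subtype.val ha).symm⟩
    · rw [F2, Finset.mem_image] at hz
      obtain ⟨a, _, ha⟩ := hz
      refine Or.inr ⟨a.1, 0, (Nat.mem_divisors.1 (Finset.mem_of_mem_erase a.2)).1, ?_,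
        (congrArg Subtype.val ha).symm⟩
      rw [add_zero]
      exact zero_mem _
    · rw [F3, Finset.mem_image] at hz
      obtain ⟨a, _, ha⟩ := hz
      refine Or.inr ⟨a.1, ((a.1 / 2 : ℕ) : ZMod n),
        (Nat.mem_divisors.1 (Finset.mem_filter.1 a.2).1).1, ?_,
        (congrArg Subtype.val ha).symm⟩
      exact half_mem (Nat.mem_divisors.1 (Finset.mem_filter.1 a.2).1).1
        (Finset.mem_filter.1 a.2).2
  have hx' := hchar x (by tauto)
  have hy' := hchar y (by tauto)
  rcases hx' with ⟨S, hS⟩ | ⟨d, i, hdn, hii, hS⟩ <;>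
    rcases hy' with ⟨T, hT⟩ | ⟨e, j, hen, hjj, hT⟩
  · rw [hS, hT]
    exact (mul_comm_of_normal _ _ (rsub_normal S)).symm
  · rw [hS, hT]
    exact (mul_comm_of_normal _ _ (rsub_normal S)).symm
  · rw [hS, hT]
    exact mul_comm_of_normal _ _ (rsub_normal T)
  · rw [hS, hT]
    exact dsub_perm _ _ i j hii hjj

end Clique
end Stmt13
namespace Stmt13
open DihedralGroup AddSubgroup SimpleGraph

theorem main (n : ℕ) (hn : 3 ≤ n) :
    (permGraph (DihedralGroup n)).cliqueNum =
      (n.divisors.erase n).card +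
        ((n.divisors.erase 1).card + (n.divisors.filter (fun d => 2 ∣ d)).card) ∧
    (permGraph (DihedralGroup n)).chromaticNumber =
      (((n.divisors.erase n).card +
        ((n.divisors.erase 1).card + (n.divisors.filter (fun d => 2 ∣ d)).card) : ℕ) : ℕ∞) := by
  haveI : NeZero n := ⟨by omega⟩
  set N := (n.divisors.erase n).card +
      ((n.divisors.erase 1).card + (n.divisors.filter (fun d => 2 ∣ d)).card) with hN
  letI : Fintype (Cols n) := Fintype.ofFinite _
  have hcolorable : (permGraph (DihedralGroup n)).Colorable N := by
    have h := (coloring (n := n)).colorable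
    rwa [← Nat.card_eq_fintype_card, card_cols] at h
  have hclique : (permGraph (DihedralGroup n)).IsNClique N (cliq n) :=
    ⟨cliq_isClique, cliq_card⟩
  haveI : Finite (Subgroup (DihedralGroup n)) := by
    have hinj : Function.Injective
        (fun S : Subgroup (DihedralGroup n) => (S : Set (DihedralGroup n))) :=
      fun a b h => SetLike.ext' h
    exact Finite.of_injective _ hinj
  letI : Fintype (V n) := Fintype.ofFinite _
  constructor
  · apply le_antisymm
    · obtain ⟨s, hs⟩ := (permGraph (DihedralGroup n)).exists_isNClique_cliqueNum
      rw [← hs.card_eq]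
      exact hs.isClique.card_le_of_colorable hcolorable
    · have h := SimpleGraph.IsClique.card_le_cliqueNum (tc := hclique.isClique)
      rwa [hclique.card_eq] at h
  · apply le_antisymm
    · exact hcolorable.chromaticNumber_le
    · have h := hclique.isClique.card_le_chromaticNumber
      rwa [hclique.card_eq] at h

end Stmt13

lemma filter_even {k : ℕ} (hk : k ≠ 0) (h2 : 2 ∣ k) :
    k.divisors.filter (fun d => 2 ∣ d) = (k / 2).divisors.image (fun e => 2 * e) := by
  obtain ⟨c, rfl⟩ := h2
  have hc0 : c ≠ 0 := by rintro rfl; simp at hk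
  have hdiv : 2 * c / 2 = c := Nat.mul_div_cancel_left _ (by omega)
  rw [hdiv]
  ext x
  simp only [Finset.mem_filter, Finset.mem_image, Nat.mem_divisors]
  constructor
  · rintro ⟨⟨hxm, -⟩, e, rfl⟩
    refine ⟨e, ⟨?_, hc0⟩, rfl⟩
    exact (Nat.mul_dvd_mul_iff_left (by omega : 0 < 2)).1 hxm
  · rintro ⟨e, ⟨he, -⟩, rfl⟩
    exact ⟨⟨Nat.mul_dvd_mul_left 2 he, hk⟩, ⟨e, rfl⟩⟩

/-- clique number and chromatic number of `Γ(D_n)`: both equal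
`2(τ(n) - 1)` when `n` is odd, and both equal `τ(n) + (2α+1)τ(n') - 2` when
`n = 2^α n'` with `n'` odd, `α ≥ 1`. In particular `Γ(D_n)` is weakly
perfect. -/
theorem stmt_13 (n : ℕ) (hn : 3 ≤ n) :
    (Odd n →
      (permGraph (DihedralGroup n)).cliqueNum = 2 * (n.divisors.card - 1) ∧
      (permGraph (DihedralGroup n)).chromaticNumber =
        ((2 * (n.divisors.card - 1) : ℕ) : ℕ∞)) ∧
    (∀ α n' : ℕ, Odd n' → 1 ≤ α → n = 2 ^ α * n' →
      (permGraph (DihedralGroup n)).cliqueNum =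
        n.divisors.card + (2 * α + 1) * n'.divisors.card - 2 ∧
      (permGraph (DihedralGroup n)).chromaticNumber =
        ((n.divisors.card + (2 * α + 1) * n'.divisors.card - 2 : ℕ) : ℕ∞)) := by
  have hn0 : n ≠ 0 := by omega
  obtain ⟨hcl, hch⟩ := Stmt13.main n hn
  have hen : (n.divisors.erase n).card = n.divisors.card - 1 :=
    Finset.card_erase_of_mem (Nat.mem_divisors_self n hn0)
  have he1 : (n.divisors.erase 1).card = n.divisors.card - 1 :=
    Finset.card_erase_of_mem (Nat.one_mem_divisors.2 hn0)
  have hτpos : 1 ≤ n.divisors.card :=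
    Finset.card_pos.2 ⟨n, Nat.mem_divisors_self n hn0⟩
  constructor
  · intro hodd
    have hE : (n.divisors.filter (fun d => 2 ∣ d)).card = 0 := by
      rw [Finset.card_eq_zero, Finset.filter_eq_empty_iff]
      intro d hd h2
      have hdn : d ∣ n := (Nat.mem_divisors.1 hd).1
      exact (Nat.not_even_iff_odd.2 hodd) (even_iff_two_dvd.2 (h2.trans hdn))
    have hval : (n.divisors.erase n).card +
        ((n.divisors.erase 1).card + (n.divisors.filter (fun d => 2 ∣ d)).card) =
        2 * (n.divisors.card - 1) := by
      rw [hen, he1, hE]; omega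
    rw [hval] at hcl hch
    exact ⟨hcl, hch⟩
  · rintro α n' hodd' hα rfl
    have hn'0 : n' ≠ 0 := by
      rintro rfl
      simp at hn0
    have hnot2 : ¬ 2 ∣ n' := by
      have := Nat.odd_iff.1 hodd'
      omega
    have hcop : Nat.Coprime (2 ^ α) n' :=
      Nat.Coprime.pow_left _ ((Nat.prime_two.coprime_iff_not_dvd).2 hnot2)
    have hcop' : Nat.Coprime (2 ^ (α - 1)) n' :=
      Nat.Coprime.pow_left _ ((Nat.prime_two.coprime_iff_not_dvd).2 hnot2)
    have hτ : (2 ^ α * n').divisors.card = (α + 1) * n'.divisors.card := by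
      rw [Nat.Coprime.card_divisors_mul hcop]
      congr 1
      rw [Nat.divisors_prime_pow Nat.prime_two, Finset.card_map, Finset.card_range]
    have h2m : 2 ∣ 2 ^ α * n' := Dvd.dvd.mul_right (dvd_pow_self 2 (by omega)) n'
    have hpow : (2 : ℕ) ^ α = 2 * 2 ^ (α - 1) := by
      conv_lhs => rw [show α = 1 + (α - 1) by omega]
      rw [pow_add, pow_one]
    have hhalf : (2 ^ α * n') / 2 = 2 ^ (α - 1) * n' := by
      rw [hpow, mul_assoc, Nat.mul_div_cancel_left _ (by omega : 0 < 2)]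
    have hE : ((2 ^ α * n').divisors.filter (fun d => 2 ∣ d)).card =
        α * n'.divisors.card := by
      rw [filter_even hn0 h2m, Finset.card_image_of_injective _ (fun a b h => by omega),
        hhalf, Nat.Coprime.card_divisors_mul hcop',
        Nat.divisors_prime_pow Nat.prime_two, Finset.card_map, Finset.card_range]
      have h5 : α - 1 + 1 = α := by omega
      rw [h5]
    have hτ'pos : 1 ≤ n'.divisors.card :=
      Finset.card_pos.2 ⟨n', Nat.mem_divisors_self n' hn'0⟩
    have hval : ((2 ^ α * n').divisors.erase (2 ^ α * n')).card +
        (((2 ^ α * n').divisors.erase 1).card +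
          ((2 ^ α * n').divisors.filter (fun d => 2 ∣ d)).card) =
        (2 ^ α * n').divisors.card + (2 * α + 1) * n'.divisors.card - 2 := by
      rw [hen, he1, hE, hτ]
      have h3 : (2 * α + 1) * n'.divisors.card =
          2 * (α * n'.divisors.card) + n'.divisors.card := by ring
      have h4 : (α + 1) * n'.divisors.card = α * n'.divisors.card + n'.divisors.card := by
        ring
      rw [h3, h4]
      omega
    rw [hval] at hcl hch
    exact ⟨hcl, hch⟩
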